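/- Let μ be a finite signed Borel measure on [0, B] (B = 1/(1−γ)) with μ([0,B]) = 0, admitting a Lebesgue density bounded in absolute value by L, and with W₁-type norm ‖μ‖_{W₁} := sup{|∫ f dμ| : f 1-Lipschitz} finite. Then sup_{x} |μ((-∞, x])| ≤ √(2 · L · ‖μ‖_{W₁}). -/

import Mathlib

open MeasureTheory Set

/-- Let `μ` be a finite signed measure on `[0, B]` (`B = 1/(1-γ)`)
of total mass zero, represented by an integrable Lebesgue density `h` supported
in `[0, B]` with `|h| ≤ L`, and with finite `W₁`-type norm
`‖μ‖_{W₁} = sup {|∫ f dμ| : f 1-Lipschitz}`. Then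
`sup_x |μ((-∞, x])| ≤ √(2 L ‖μ‖_{W₁})`. -/
theorem ks_norm_le_sqrt_of_signed
    (γ : ℝ) (hγ : γ ∈ Set.Ioo (0 : ℝ) 1) (L : ℝ) (hL : 0 < L)
    (h : ℝ → ℝ) (hint : Integrable h)
    (hmass : (∫ x, h x) = 0)
    (hsupp : ∀ x, x ∉ Set.Icc (0 : ℝ) (1 / (1 - γ)) → h x = 0)
    (hbdd : ∀ x, |h x| ≤ L)
    (hW : BddAbove {r : ℝ | ∃ f : ℝ → ℝ, LipschitzWith 1 f ∧ r = |∫ x, f x * h x|}) :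
    ∀ x : ℝ, |∫ y in Set.Iic x, h y| ≤
      Real.sqrt (2 * L *
        sSup {r : ℝ | ∃ f : ℝ → ℝ, LipschitzWith 1 f ∧ r = |∫ x, f x * h x|}) := by
  intro x
  set S := {r : ℝ | ∃ f : ℝ → ℝ, LipschitzWith 1 f ∧ r = |∫ x, f x * h x|} with hSdef
  set W := sSup S with hWdef
  set a := ∫ y in Set.Iic x, h y with ha
  set δ := |a| / L with hδ
  have hδ0 : 0 ≤ δ := div_nonneg (abs_nonneg a) hL.le
  -- the test function
  set f : ℝ → ℝ := fun y => min δ (max (x + δ - y) 0) with hf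
  have hlip : LipschitzWith 1 f := by
    have h1 : LipschitzWith 1 (fun y : ℝ => x + δ - y) := by
      apply LipschitzWith.of_dist_le_mul
      intro p q
      simp only [Real.dist_eq, NNReal.coe_one, one_mul]
      rw [show x + δ - p - (x + δ - q) = -(p - q) by ring, abs_neg]
    exact (h1.max_const 0).const_min δ
  have hf_nonneg : ∀ y, 0 ≤ f y := fun y => le_min hδ0 (le_max_right _ _)
  have hf_le : ∀ y, f y ≤ δ := fun y => min_le_left _ _
  have hcont : Continuous f := hlip.continuous
  have hfh : Integrable (fun y => f y * h y) := by
    refine Integrable.bdd_mul (c := δ) hint hcont.aestronglyMeasurable (Filter.Eventually.of_forall fun y => ?_)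
    rw [Real.norm_eq_abs, abs_of_nonneg (hf_nonneg y)]
    exact hf_le y
  -- value on Iic x
  have hIic : (∫ y in Set.Iic x, f y * h y) = δ * a := by
    rw [show δ * a = ∫ y in Set.Iic x, δ * h y from (integral_const_mul δ h).symm]
    apply setIntegral_congr_fun measurableSet_Iic
    intro y hy
    have hfy : f y = δ := by
      have h1 : (0:ℝ) ≤ x + δ - y := by
        simp only [Set.mem_Iic] at hy; linarith
      have h2 : δ ≤ x + δ - y := by
        simp only [Set.mem_Iic] at hy; linarith
      simp [hf, max_eq_left h1, min_eq_left h2]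
    show f y * h y = δ * h y
    rw [hfy]
  -- bound on Ioi x
  have hIoi : |∫ y in Set.Ioi x, f y * h y| ≤ L * δ ^ 2 / 2 := by
    have hsplit : Set.Ioi x = Set.Ioc x (x + δ) ∪ Set.Ioi (x + δ) :=
      (Set.Ioc_union_Ioi_eq_Ioi (by linarith)).symm
    have hzero : (∫ y in Set.Ioi (x + δ), f y * h y) = 0 := by
      rw [show (0:ℝ) = ∫ y in Set.Ioi (x + δ), (0:ℝ) from (by simp)]
      apply setIntegral_congr_fun measurableSet_Ioi
      intro y hy
      have hfy : f y = 0 := by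
        have h1 : x + δ - y ≤ 0 := by
          simp only [Set.mem_Ioi] at hy; linarith
        simp [hf, max_eq_right h1, min_eq_right hδ0]
      show f y * h y = 0
      rw [hfy, zero_mul]
    have hIoieq : (∫ y in Set.Ioi x, f y * h y) = ∫ y in Set.Ioc x (x + δ), f y * h y := by
      rw [hsplit, setIntegral_union (by simp [Set.disjoint_left]) measurableSet_Ioi
        (hfh.integrableOn) (hfh.integrableOn), hzero, add_zero]
    rw [hIoieq]
    have habs : |∫ y in Set.Ioc x (x + δ), f y * h y| ≤
        ∫ y in Set.Ioc x (x + δ), |f y| * |h y| := by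
      simpa [Real.norm_eq_abs, abs_mul] using
        norm_integral_le_integral_norm (μ := volume.restrict (Set.Ioc x (x + δ)))
          (fun y => f y * h y)
    have hlin : IntegrableOn (fun y => (x + δ - y) * L) (Set.Ioc x (x + δ)) := by
      exact ((continuous_const.sub continuous_id).mul continuous_const).integrableOn_Ioc
    have hmono : (∫ y in Set.Ioc x (x + δ), |f y| * |h y|) ≤
        ∫ y in Set.Ioc x (x + δ), (x + δ - y) * L := by
      apply setIntegral_mono_on ((hfh.abs.integrableOn).congr_fun
        (fun y _ => (abs_mul (f y) (h y))) measurableSet_Ioc) hlin measurableSet_Ioc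
      intro y hy
      simp only [Set.mem_Ioc] at hy
      have hfy : f y = x + δ - y := by
        have h1 : (0:ℝ) ≤ x + δ - y := by linarith [hy.2]
        have h2 : x + δ - y ≤ δ := by linarith [hy.1]
        simp [hf, max_eq_left h1, min_eq_right h2]
      calc |f y| * |h y| = f y * |h y| := by
            rw [abs_of_nonneg (hf_nonneg y)]
        _ ≤ f y * L := mul_le_mul_of_nonneg_left (hbdd y) (hf_nonneg y)
        _ = (x + δ - y) * L := by rw [hfy]
    have hcomp : (∫ y in Set.Ioc x (x + δ), (x + δ - y) * L) = L * δ ^ 2 / 2 := by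
      rw [← intervalIntegral.integral_of_le (by linarith : x ≤ x + δ)]
      rw [intervalIntegral.integral_mul_const]
      rw [intervalIntegral.integral_sub intervalIntegrable_const
        intervalIntegral.intervalIntegrable_id]
      rw [intervalIntegral.integral_const, integral_id]
      simp only [smul_eq_mul]
      ring
    calc |∫ y in Set.Ioc x (x + δ), f y * h y| ≤
        ∫ y in Set.Ioc x (x + δ), |f y| * |h y| := habs
      _ ≤ ∫ y in Set.Ioc x (x + δ), (x + δ - y) * L := hmono
      _ = L * δ ^ 2 / 2 := hcomp
  -- combine
  have hWmem : |∫ y, f y * h y| ∈ S := ⟨f, hlip, rfl⟩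
  have hIleW : |∫ y, f y * h y| ≤ W := le_csSup hW hWmem
  have hWnn : 0 ≤ W := le_trans (abs_nonneg _) hIleW
  have hdecomp : (∫ y, f y * h y) =
      (∫ y in Set.Iic x, f y * h y) + ∫ y in Set.Ioi x, f y * h y := by
    exact (intervalIntegral.integral_Iic_add_Ioi hfh.integrableOn hfh.integrableOn).symm
  -- |δ a| - |R| ≤ |δ a + R|
  have hkey : a ^ 2 ≤ 2 * L * W := by
    have hRabs : |∫ y in Set.Ioi x, f y * h y| ≤ L * δ ^ 2 / 2 := hIoi
    set R := ∫ y in Set.Ioi x, f y * h y with hR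
    have hI : (∫ y, f y * h y) = δ * a + R := by rw [hdecomp, hIic]
    have htri : |δ * a| - |R| ≤ |δ * a + R| := by
      have := abs_add_le (δ * a + R) (-R)
      simp only [add_neg_cancel_right, abs_neg] at this
      linarith
    have haa : |a| * |a| = a ^ 2 := by rw [abs_mul_abs_self, sq]
    have hda : |δ * a| = a ^ 2 / L := by
      rw [abs_mul, abs_of_nonneg hδ0, hδ, div_mul_eq_mul_div, haa]
    have hLd : L * δ ^ 2 / 2 = a ^ 2 / (2 * L) := by
      rw [hδ]; field_simp; ring_nf; exact sq_abs a
    have h1 : a ^ 2 / L - a ^ 2 / (2 * L) ≤ |∫ y, f y * h y| := by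
      rw [hI]
      calc a ^ 2 / L - a ^ 2 / (2 * L) = |δ * a| - a ^ 2 / (2 * L) := by rw [hda]
        _ ≤ |δ * a| - |R| := by rw [← hLd]; linarith
        _ ≤ |δ * a + R| := htri
    have h2 : a ^ 2 / L - a ^ 2 / (2 * L) = a ^ 2 / (2 * L) := by field_simp; ring
    have h3 : a ^ 2 / (2 * L) ≤ W := by
      calc a ^ 2 / (2 * L) = a ^ 2 / L - a ^ 2 / (2 * L) := h2.symm
        _ ≤ |∫ y, f y * h y| := h1
        _ ≤ W := hIleW
    have h2L : 0 < 2 * L := by linarith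
    calc a ^ 2 = (a ^ 2 / (2 * L)) * (2 * L) := by field_simp
      _ ≤ W * (2 * L) := mul_le_mul_of_nonneg_right h3 h2L.le
      _ = 2 * L * W := by ring
  calc |a| = Real.sqrt (a ^ 2) := (Real.sqrt_sq_eq_abs a).symm
    _ ≤ Real.sqrt (2 * L * W) := Real.sqrt_le_sqrt hkey
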